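/- Let a, b, d ∈ GL_n(ℂ) act irreducibly on ℂⁿ. If z ∈ gl_n satisfies Tr([x,d]·ab·z) = Tr(d·[x,a]·b·z) = Tr(da·[x,b]·z) = 0 for all x ∈ gl_n, then z is a scalar multiple of b⁻¹a⁻¹d⁻¹. -/

import Mathlib

open Matrix

lemma traceKill {n : ℕ} (m : Matrix (Fin n) (Fin n) ℂ)
    (h : ∀ x, (x * m).trace = 0) : m = 0 := by
  ext i j
  have := h (Matrix.single j i 1)
  simp only [Matrix.trace, Matrix.diag, Matrix.mul_apply, Matrix.single, Matrix.of_apply, one_mul,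
    ite_mul, zero_mul, ite_and, Finset.sum_ite_eq, Finset.sum_ite_eq',
    Finset.mem_univ, if_true] at this
  simpa using this

/-- if `a, b, d ∈ GL_n(ℂ)` act irreducibly on `ℂⁿ` and `z` satisfies
`Tr([x,d]·ab·z) = Tr(d·[x,a]·b·z) = Tr(da·[x,b]·z) = 0` for all `x`, then `z` is a
scalar multiple of `b⁻¹a⁻¹d⁻¹`. -/
theorem stmt6 (n : ℕ) (a b d : Matrix (Fin n) (Fin n) ℂ)
    (ha : IsUnit a) (hb : IsUnit b) (hd : IsUnit d)
    (hirr : ∀ W : Submodule ℂ (Fin n → ℂ),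
      (∀ v ∈ W, a.mulVec v ∈ W) → (∀ v ∈ W, b.mulVec v ∈ W) →
      (∀ v ∈ W, d.mulVec v ∈ W) → W = ⊥ ∨ W = ⊤)
    (z : Matrix (Fin n) (Fin n) ℂ)
    (h1 : ∀ x : Matrix (Fin n) (Fin n) ℂ, ((x * d - d * x) * (a * b) * z).trace = 0)
    (h2 : ∀ x : Matrix (Fin n) (Fin n) ℂ, (d * (x * a - a * x) * b * z).trace = 0)
    (h3 : ∀ x : Matrix (Fin n) (Fin n) ℂ, ((d * a) * (x * b - b * x) * z).trace = 0) :
    ∃ c : ℂ, z = c • (b⁻¹ * a⁻¹ * d⁻¹) := by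
  rcases Nat.eq_zero_or_pos n with hn | hn
  · subst hn
    exact ⟨0, Subsingleton.elim _ _⟩
  -- the three commutation relations
  have E1 : d * (a * b * z) = a * b * z * d := by
    rw [← sub_eq_zero]
    apply traceKill
    intro x
    have t := h1 x
    rw [sub_mul, sub_mul, trace_sub] at t
    rw [mul_sub, trace_sub]
    have t1 : (x * (d * (a * b * z))).trace = (x * d * (a * b) * z).trace :=
      congrArg Matrix.trace (by noncomm_ring)
    have t2 : (x * (a * b * z * d)).trace = (d * x * (a * b) * z).trace := by
      calc (x * (a * b * z * d)).trace
          = ((x * (a * b) * z) * d).trace := congrArg Matrix.trace (by noncomm_ring)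
        _ = (d * (x * (a * b) * z)).trace := trace_mul_comm _ _
        _ = (d * x * (a * b) * z).trace := congrArg Matrix.trace (by noncomm_ring)
    rw [t1, t2]; exact t
  have E2 : a * (b * z * d) = b * z * d * a := by
    rw [← sub_eq_zero]
    apply traceKill
    intro x
    have t := h2 x
    rw [mul_sub, sub_mul, sub_mul, trace_sub] at t
    rw [mul_sub, trace_sub]
    have t1 : (x * (a * (b * z * d))).trace = (d * (x * a) * b * z).trace := by
      calc (x * (a * (b * z * d))).trace
          = (((x * a) * b * z) * d).trace := congrArg Matrix.trace (by noncomm_ring)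
        _ = (d * ((x * a) * b * z)).trace := trace_mul_comm _ _
        _ = (d * (x * a) * b * z).trace := congrArg Matrix.trace (by noncomm_ring)
    have t2 : (x * (b * z * d * a)).trace = (d * (a * x) * b * z).trace := by
      calc (x * (b * z * d * a)).trace
          = ((x * (b * z * d)) * a).trace := congrArg Matrix.trace (by noncomm_ring)
        _ = (a * (x * (b * z * d))).trace := trace_mul_comm _ _
        _ = (((a * x) * b * z) * d).trace := congrArg Matrix.trace (by noncomm_ring)
        _ = (d * ((a * x) * b * z)).trace := trace_mul_comm _ _
        _ = (d * (a * x) * b * z).trace := congrArg Matrix.trace (by noncomm_ring)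
    rw [t1, t2]; exact t
  have E3 : b * (z * (d * a)) = z * (d * a) * b := by
    rw [← sub_eq_zero]
    apply traceKill
    intro x
    have t := h3 x
    rw [mul_sub, sub_mul, trace_sub] at t
    rw [mul_sub, trace_sub]
    have t1 : (x * (b * (z * (d * a)))).trace = ((d * a) * (x * b) * z).trace := by
      calc (x * (b * (z * (d * a)))).trace
          = (((x * b) * z) * (d * a)).trace := congrArg Matrix.trace (by noncomm_ring)
        _ = ((d * a) * ((x * b) * z)).trace := trace_mul_comm _ _
        _ = ((d * a) * (x * b) * z).trace := congrArg Matrix.trace (by noncomm_ring)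
    have t2 : (x * (z * (d * a) * b)).trace = ((d * a) * (b * x) * z).trace := by
      calc (x * (z * (d * a) * b)).trace
          = ((x * (z * (d * a))) * b).trace := congrArg Matrix.trace (by noncomm_ring)
        _ = (b * (x * (z * (d * a)))).trace := trace_mul_comm _ _
        _ = (((b * x) * z) * (d * a)).trace := congrArg Matrix.trace (by noncomm_ring)
        _ = ((d * a) * ((b * x) * z)).trace := trace_mul_comm _ _
        _ = ((d * a) * (b * x) * z).trace := congrArg Matrix.trace (by noncomm_ring)
    rw [t1, t2]; exact t
  -- u = b*z*d*a commutes with a, b, d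
  have hu3 : b * z * d * a = z * (d * a) * b := by
    rw [← E3]; noncomm_ring
  have hu1 : b * z * d * a = d * (a * b * z) := by
    rw [← E2, E1]; noncomm_ring
  have hua : a * (b * z * d * a) = (b * z * d * a) * a := by
    calc a * (b * z * d * a) = (a * (b * z * d)) * a := by noncomm_ring
      _ = (b * z * d * a) * a := by rw [E2]
  have hub : b * (b * z * d * a) = (b * z * d * a) * b := by
    calc b * (b * z * d * a) = b * (z * (d * a) * b) := by rw [hu3]
      _ = (b * (z * (d * a))) * b := by noncomm_ring
      _ = (b * z * d * a) * b := by rw [show b * (z * (d * a)) = b * z * d * a by noncomm_ring]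
  have hud : d * (b * z * d * a) = (b * z * d * a) * d := by
    calc d * (b * z * d * a) = d * (d * (a * b * z)) := by rw [hu1]
      _ = d * ((a * b * z) * d) := by rw [E1]
      _ = (d * (a * b * z)) * d := by noncomm_ring
      _ = (b * z * d * a) * d := by rw [← hu1]
  set u : Matrix (Fin n) (Fin n) ℂ := b * z * d * a with hu
  -- u is scalar by irreducibility
  haveI : Nonempty (Fin n) := ⟨⟨0, hn⟩⟩
  obtain ⟨c, hc⟩ := Module.End.exists_eigenvalue (Matrix.toLin' u)
  obtain ⟨v, hv⟩ := hc.exists_hasEigenvector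
  set W : Submodule ℂ (Fin n → ℂ) := Module.End.eigenspace (Matrix.toLin' u) c with hW
  have memW : ∀ w, w ∈ W ↔ u.mulVec w = c • w := by
    intro w
    rw [hW, Module.End.mem_eigenspace_iff, Matrix.toLin'_apply]
  have inv : ∀ (m : Matrix (Fin n) (Fin n) ℂ), m * u = u * m → ∀ w ∈ W, m.mulVec w ∈ W := by
    intro m hm w hw
    rw [memW] at hw ⊢
    rw [Matrix.mulVec_mulVec, ← hm, ← Matrix.mulVec_mulVec, hw, Matrix.mulVec_smul]
  have hWtop : W = ⊤ := by
    rcases hirr W (inv a hua) (inv b hub) (inv d hud) with h | h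
    · exfalso
      have : v ∈ W := hv.1
      rw [h, Submodule.mem_bot] at this
      exact hv.2 this
    · exact h
  have hscal : u = c • (1 : Matrix (Fin n) (Fin n) ℂ) := by
    apply Matrix.toLin'.injective
    apply LinearMap.ext
    intro w
    have hwW : w ∈ W := hWtop ▸ Submodule.mem_top
    rw [memW] at hwW
    simp [Matrix.toLin'_apply, hwW, Matrix.smul_mulVec]
  -- extract z
  have hadet : IsUnit a.det := (Matrix.isUnit_iff_isUnit_det a).mp ha
  have hbdet : IsUnit b.det := (Matrix.isUnit_iff_isUnit_det b).mp hb
  have hddet : IsUnit d.det := (Matrix.isUnit_iff_isUnit_det d).mp hd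
  refine ⟨c, ?_⟩
  have step1 : z * d * a = c • b⁻¹ := by
    have := congrArg (fun m => b⁻¹ * m) (hu.symm.trans hscal)
    simpa [← mul_assoc, Matrix.nonsing_inv_mul b hbdet, Matrix.mul_smul, Matrix.smul_mul]
      using this
  have step2 : z * d = c • (b⁻¹ * a⁻¹) := by
    have := congrArg (fun m => m * a⁻¹) step1
    simpa [mul_assoc, Matrix.mul_nonsing_inv a hadet, Matrix.mul_smul, Matrix.smul_mul]
      using this
  have step3 : z = c • (b⁻¹ * a⁻¹ * d⁻¹) := by
    have := congrArg (fun m => m * d⁻¹) step2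
    simpa [mul_assoc, Matrix.mul_nonsing_inv d hddet, Matrix.mul_smul, Matrix.smul_mul]
      using this
  exact step3
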